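/- No tree T satisfies γ_g(T) = 4 and γ_g'(T) = 3. -/

import Mathlib

set_option linter.unusedSectionVars false
set_option maxHeartbeats 1000000


open Finset

namespace DomGame

variable {V : Type*} [Fintype V] [DecidableEq V]

/-- Closed neighborhood of `v` in `G`, as a `Finset`. -/
noncomputable def cn (G : SimpleGraph V) (v : V) : Finset V :=
  haveI : DecidablePred (fun u : V => u = v ∨ G.Adj v u) := fun _ => Classical.propDecidable _
  Finset.univ.filter (fun u : V => u = v ∨ G.Adj v u)

/-- Value (number of remaining moves, optimal play) of the domination game on `G`,
with fuel, where `D` is the set of already dominated vertices and `who = true`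
means Dominator is to move (minimizing); `who = false` means Staller (maximizing). -/
noncomputable def auxVal (G : SimpleGraph V) : ℕ → Bool → Finset V → ℕ
  | 0, _, _ => 0
  | n + 1, who, D =>
    if D = Finset.univ then 0
    else
      haveI : DecidablePred (fun v : V => ¬ cn G v ⊆ D) := fun _ => Classical.propDecidable _
      let moves : Finset V := Finset.univ.filter (fun v : V => ¬ cn G v ⊆ D)
      if who then
        WithTop.untopD 0 ((moves.image (fun v => 1 + auxVal G n false (D ∪ cn G v))).min)
      else
        moves.sup (fun v => 1 + auxVal G n true (D ∪ cn G v))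

/-- Remaining moves of the domination game on the partially dominated graph `(G, D)`,
Dominator to move, both players optimal. -/
noncomputable def gVal (G : SimpleGraph V) (D : Finset V) : ℕ :=
  auxVal G (Fintype.card V) true D

/-- Remaining moves, Staller to move. -/
noncomputable def gVal' (G : SimpleGraph V) (D : Finset V) : ℕ :=
  auxVal G (Fintype.card V) false D

/-- The game domination number (Dominator starts). -/
noncomputable def gammaG (G : SimpleGraph V) : ℕ := gVal G ∅

/-- The Staller-start game domination number. -/
noncomputable def gammaG' (G : SimpleGraph V) : ℕ := gVal' G ∅

/-- `S` is a dominating set of `G`. -/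
def IsDomSet (G : SimpleGraph V) (S : Finset V) : Prop :=
  ∀ v : V, ∃ u ∈ S, u = v ∨ G.Adj u v

/-- The domination number of `G`. -/
noncomputable def gamma (G : SimpleGraph V) : ℕ :=
  sInf {n | ∃ S : Finset V, IsDomSet G S ∧ S.card = n}

variable {G : SimpleGraph V}

lemma mem_cn {u v : V} : u ∈ cn G v ↔ u = v ∨ G.Adj v u := by
  simp [cn]

lemma self_mem_cn (v : V) : v ∈ cn G v := mem_cn.2 (Or.inl rfl)

lemma adj_mem_cn {u v : V} (h : G.Adj v u) : u ∈ cn G v := mem_cn.2 (Or.inr h)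

lemma adj_mem_cn' {u v : V} (h : G.Adj u v) : u ∈ cn G v := mem_cn.2 (Or.inr (G.adj_symm h))

lemma cn_valid {v : V} (D : Finset V) (h : v ∉ D) : ¬ cn G v ⊆ D :=
  fun hs => h (hs (self_mem_cn v))

/-- The moves finset, spelled exactly as in `auxVal`. -/
noncomputable def mv (G : SimpleGraph V) (D : Finset V) : Finset V :=
  @Finset.filter V (fun v : V => ¬ cn G v ⊆ D) (fun _ => Classical.propDecidable _)
    Finset.univ

lemma mem_mv {v : V} {D : Finset V} : v ∈ mv G D ↔ ¬ cn G v ⊆ D := by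
  simp [mv]

lemma mv_nonempty {D : Finset V} (hD : D ≠ Finset.univ) : (mv G D).Nonempty := by
  have : ¬ Finset.univ ⊆ D := fun h => hD (Finset.eq_univ_iff_forall.2 (fun x => h (Finset.mem_univ x)))
  obtain ⟨v, _, hv⟩ := Finset.not_subset.1 this
  exact ⟨v, mem_mv.2 (cn_valid D hv)⟩

lemma auxVal_true_eq {n : ℕ} {D : Finset V} (hD : D ≠ Finset.univ) :
    auxVal G (n+1) true D =
      WithTop.untopD 0 (((mv G D).image (fun v => 1 + auxVal G n false (D ∪ cn G v))).min) := by
  rw [auxVal]; simp only [hD, if_false, if_true]; rfl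

lemma auxVal_false_eq {n : ℕ} {D : Finset V} (hD : D ≠ Finset.univ) :
    auxVal G (n+1) false D = (mv G D).sup (fun v => 1 + auxVal G n true (D ∪ cn G v)) := by
  rw [auxVal]; simp only [hD, if_false]; rfl

lemma auxVal_univ (n : ℕ) (who : Bool) : auxVal G n who Finset.univ = 0 := by
  cases n <;> simp [auxVal]

lemma ne_univ_of_pos {n : ℕ} {who : Bool} {D : Finset V}
    (h : 1 ≤ auxVal G n who D) : D ≠ Finset.univ := by
  intro hD; rw [hD, auxVal_univ] at h; omega

lemma f_ge {n k : ℕ} {D : Finset V} (h : k + 1 ≤ auxVal G (n+1) true D)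
    {d : V} (hd : ¬ cn G d ⊆ D) : k ≤ auxVal G n false (D ∪ cn G d) := by
  have hD : D ≠ Finset.univ := ne_univ_of_pos (le_trans (by omega) h)
  rw [auxVal_true_eq hD] at h
  have hmem : (1 + auxVal G n false (D ∪ cn G d)) ∈
      (mv G D).image (fun v => 1 + auxVal G n false (D ∪ cn G v)) :=
    Finset.mem_image_of_mem _ (mem_mv.2 hd)
  obtain ⟨b, hb⟩ := Finset.min_of_mem hmem
  have hmin := Finset.min_le hmem
  rw [hb] at hmin h
  simp only [WithTop.untopD_coe] at h
  have : (b : ℕ) ≤ 1 + auxVal G n false (D ∪ cn G d) := by exact_mod_cast hmin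
  omega

lemma f_le {n k : ℕ} {D : Finset V} (h : auxVal G (n+1) true D ≤ k + 1)
    (hD : D ≠ Finset.univ) :
    ∃ d, ¬ cn G d ⊆ D ∧ auxVal G n false (D ∪ cn G d) ≤ k := by
  rw [auxVal_true_eq hD] at h
  have hne : ((mv G D).image (fun v => 1 + auxVal G n false (D ∪ cn G v))).Nonempty :=
    (mv_nonempty hD).image _
  obtain ⟨b, hb⟩ := Finset.min_of_nonempty hne
  have hbmem := Finset.mem_of_min hb
  rw [hb, WithTop.untopD_coe] at h
  obtain ⟨d, hd, hdb⟩ := Finset.mem_image.1 hbmem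
  exact ⟨d, mem_mv.1 hd, by omega⟩

lemma g_ge {n k : ℕ} {D : Finset V} (h : k + 1 ≤ auxVal G (n+1) false D) :
    ∃ s, ¬ cn G s ⊆ D ∧ k ≤ auxVal G n true (D ∪ cn G s) := by
  have hD : D ≠ Finset.univ := ne_univ_of_pos (le_trans (by omega) h)
  rw [auxVal_false_eq hD] at h
  by_contra hc
  push_neg at hc
  have : (mv G D).sup (fun v => 1 + auxVal G n true (D ∪ cn G v)) ≤ k := by
    apply Finset.sup_le
    intro v hv
    have := hc v (mem_mv.1 hv)
    omega
  omega

lemma g_le {n k : ℕ} {D : Finset V} (h : auxVal G (n+1) false D ≤ k + 1)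
    {s : V} (hs : ¬ cn G s ⊆ D) : auxVal G n true (D ∪ cn G s) ≤ k := by
  by_cases hD : D = Finset.univ
  · have : D ∪ cn G s = Finset.univ := by rw [hD]; simp
    rw [this, auxVal_univ]; omega
  · rw [auxVal_false_eq hD] at h
    have h2 : 1 + auxVal G n true (D ∪ cn G s) ≤
        (mv G D).sup (fun v => 1 + auxVal G n true (D ∪ cn G v)) :=
      Finset.le_sup (f := fun v => 1 + auxVal G n true (D ∪ cn G v)) (mem_mv.2 hs)
    omega

lemma f_eq_zero {n : ℕ} {D : Finset V} (h : auxVal G (n+1) true D = 0) :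
    D = Finset.univ := by
  by_contra hD
  rw [auxVal_true_eq hD] at h
  have hne := (mv_nonempty (G := G) hD)
  obtain ⟨b, hb⟩ := Finset.min_of_nonempty (hne.image (fun v => 1 + auxVal G n false (D ∪ cn G v)))
  have hbmem := Finset.mem_of_min hb
  rw [hb, WithTop.untopD_coe] at h
  obtain ⟨x, _, hxb⟩ := Finset.mem_image.1 hbmem
  omega

lemma auxVal_le_fuel (n : ℕ) (who : Bool) (D : Finset V) : auxVal G n who D ≤ n := by
  induction n generalizing who D with
  | zero => simp [auxVal]
  | succ n ih =>
    by_cases hD : D = Finset.univ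
    · rw [hD, auxVal_univ]; omega
    · cases who
      · rw [auxVal_false_eq hD]
        apply Finset.sup_le
        intro v _
        have := ih true (D ∪ cn G v)
        omega
      · rw [auxVal_true_eq hD]
        have hne : ((mv G D).image (fun v => 1 + auxVal G n false (D ∪ cn G v))).Nonempty :=
          (mv_nonempty hD).image _
        obtain ⟨b, hb⟩ := Finset.min_of_nonempty hne
        rw [hb, WithTop.untopD_coe]
        obtain ⟨x, _, hxb⟩ := Finset.mem_image.1 (Finset.mem_of_min hb)
        have := ih false (D ∪ cn G x)
        omega


noncomputable def path2 {a b c : V} (hab : G.Adj a b) (hbc : G.Adj b c)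
    (hac : a ≠ c) : G.Path a c :=
  ⟨SimpleGraph.Walk.cons hab (SimpleGraph.Walk.cons hbc SimpleGraph.Walk.nil), by
    simp [SimpleGraph.Walk.cons_isPath_iff]
    exact ⟨hbc.ne, hab.ne, hac⟩⟩

lemma no_triangle (hT : G.IsAcyclic) {a b c : V} (hab : G.Adj a b) (hbc : G.Adj b c)
    (hac : G.Adj a c) : False := by
  have h := SimpleGraph.isAcyclic_iff_path_unique.1 hT
    (path2 hab hbc hac.ne) (SimpleGraph.Path.singleton hac)
  have := congrArg (fun p : G.Path a c => p.1.support) h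
  simp [path2, SimpleGraph.Path.singleton] at this

lemma no_C4 (hT : G.IsAcyclic) {a b c d : V} (hb : b ≠ d) (hac : a ≠ c) (hab : G.Adj a b)
    (hbc : G.Adj b c) (hcd : G.Adj c d) (hda : G.Adj d a) : False := by
  have h := SimpleGraph.isAcyclic_iff_path_unique.1 hT
    (path2 hab hbc hac) (path2 (G.adj_symm hda) (G.adj_symm hcd) hac)
  have := congrArg (fun p : G.Path a c => p.1.support) h
  simp [path2] at this
  exact hb this

lemma closed_reach {S : Set V} (hS : ∀ a ∈ S, ∀ b, G.Adj a b → b ∈ S)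
    {a b : V} (ha : a ∈ S) (h : G.Reachable a b) : b ∈ S := by
  obtain ⟨w⟩ := h
  induction w with
  | nil => exact ha
  | cons hadj _ ih => exact ih (hS _ ha _ hadj)

lemma exists_adj (hc : G.Connected) (h2 : 1 < Fintype.card V) (a : V) :
    ∃ b, G.Adj a b := by
  obtain ⟨b, hb⟩ := Fintype.exists_ne_of_one_lt_card h2 a
  obtain ⟨w⟩ := hc.preconnected a b
  cases w with
  | nil => exact absurd rfl hb.symm
  | cons hadj _ => exact ⟨_, hadj⟩

lemma exists_leaf (hT : G.IsTree) (h2 : 1 < Fintype.card V) :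
    ∃ ℓ p : V, G.Adj ℓ p ∧ ∀ w, G.Adj ℓ w → w = p := by
  classical
  have hedge : G.edgeFinset.card + 1 = Fintype.card V := hT.card_edgeFinset
  have hdeg : ∑ v : V, G.degree v = 2 * G.edgeFinset.card :=
    SimpleGraph.sum_degrees_eq_twice_card_edges G
  have : ∃ ℓ : V, G.degree ℓ < 2 := by
    by_contra hcon
    push_neg at hcon
    have : ∑ v : V, (2:ℕ) ≤ ∑ v : V, G.degree v := Finset.sum_le_sum (fun v _ => hcon v)
    simp [Finset.sum_const, Finset.card_univ] at this
    omega
  obtain ⟨ℓ, hℓ⟩ := this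
  obtain ⟨p, hp⟩ := exists_adj hT.isConnected h2 ℓ
  refine ⟨ℓ, p, hp, fun w hw => ?_⟩
  by_contra hne
  have : ({p, w} : Finset V) ⊆ G.neighborFinset ℓ := by
    intro x hx
    simp at hx
    rcases hx with rfl | rfl <;> simp [SimpleGraph.mem_neighborFinset, hp, hw]
  have hcard := Finset.card_le_card this
  rw [Finset.card_pair (fun h => hne h.symm)] at hcard
  rw [SimpleGraph.card_neighborFinset_eq_degree] at hcard
  omega

lemma core (T : SimpleGraph V) (hT : T.IsTree) (h2 : 1 < Fintype.card V)
    (hA : ∀ d : V, ∃ s, ¬ cn T s ⊆ cn T d ∧ ∀ x, cn T d ∪ cn T s ∪ cn T x ≠ Finset.univ)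
    (hB : ∀ s : V, cn T s ≠ Finset.univ →
      ∃ d, ∀ t, ¬ cn T t ⊆ cn T s ∪ cn T d → cn T s ∪ cn T d ∪ cn T t = Finset.univ) :
    False := by
  classical
  have acyc := hT.IsAcyclic
  have conn := hT.isConnected
  have tri : ∀ {a b c : V}, T.Adj a b → T.Adj b c → T.Adj a c → False :=
    fun hab hbc hac => no_triangle acyc hab hbc hac
  -- no closed neighborhood is everything
  have hNU : ∀ v : V, cn T v ≠ Finset.univ := by
    intro v hv
    obtain ⟨s, _, hall⟩ := hA v
    exact hall v (Finset.eq_univ_iff_forall.2 (fun x => by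
      simp only [Finset.mem_union]
      exact Or.inl (Or.inl (hv ▸ Finset.mem_univ x))))
  -- dagger: every vertex has a partner covering all but exactly one vertex
  have hDag : ∀ s : V, ∃ e u : V, u ∉ cn T s ∧ u ∉ cn T e ∧
      ∀ v, v ≠ u → v ∈ cn T s ∪ cn T e := by
    intro s
    obtain ⟨d, hgood⟩ := hB s (hNU s)
    have hBne : cn T s ∪ cn T d ≠ Finset.univ := by
      intro hun
      obtain ⟨σ, _, hall⟩ := hA d
      apply hall s
      apply Finset.eq_univ_iff_forall.2
      intro x
      have : x ∈ cn T s ∪ cn T d := hun ▸ Finset.mem_univ x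
      simp only [Finset.mem_union] at this ⊢
      tauto
    obtain ⟨u, hu⟩ : ∃ u, u ∉ cn T s ∪ cn T d := by
      by_contra hc; push_neg at hc
      exact hBne (Finset.eq_univ_iff_forall.2 hc)
    have hcov : ∀ z, z ∉ cn T s ∪ cn T d → ∀ v, v ∈ cn T s ∪ cn T d ∪ cn T z := by
      intro z hz v
      have : cn T s ∪ cn T d ∪ cn T z = Finset.univ :=
        hgood z (fun hsub => hz (hsub (self_mem_cn z)))
      rw [this]; exact Finset.mem_univ v
    refine ⟨d, u, fun h => hu (Finset.mem_union_left _ h),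
      fun h => hu (Finset.mem_union_right _ h), ?_⟩
    intro v hvu
    by_contra hv
    have hu1 : u ∉ cn T s := fun h => hu (Finset.mem_union_left _ h)
    have hu2 : u ∉ cn T d := fun h => hu (Finset.mem_union_right _ h)
    -- v, u both outside B, distinct
    have hadjuv : T.Adj v u := by
      have := hcov v hv u
      rcases Finset.mem_union.1 this with h | h
      · exact absurd h hu
      · rcases mem_cn.1 h with e | e
        · exact absurd e hvu.symm
        · exact e
    -- any neighbor of an outside vertex is u or v
    have hnb : ∀ z w, z ∉ cn T s ∪ cn T d → T.Adj z w → w = u ∨ w = v := by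
      intro z w hz hzw
      by_contra hc
      push_neg at hc
      have hwB : ∀ y, y ∈ cn T s ∪ cn T d ∪ cn T w := by
        intro y
        have : cn T s ∪ cn T d ∪ cn T w = Finset.univ := by
          apply hgood w
          intro hsub
          exact hz (hsub (adj_mem_cn' hzw))
        rw [this]; exact Finset.mem_univ y
      have hu' : u ∈ cn T w := by
        have := hwB u
        rcases Finset.mem_union.1 this with h | h
        · exact absurd h hu
        · exact h
      have hv' : v ∈ cn T w := by
        have := hwB v
        simp only [Finset.mem_union] at this
        rcases this with (h | h) | h
        · exact absurd (Finset.mem_union_left _ h) hv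
        · exact absurd (Finset.mem_union_right _ h) hv
        · exact h
      rcases mem_cn.1 hu' with e | eu
      · exact hc.1 e.symm
      · rcases mem_cn.1 hv' with e | ev
        · exact hc.2 e.symm
        · exact tri (T.adj_symm eu) ev (T.adj_symm hadjuv)
    -- closure
    have hS : ∀ a ∈ ({u, v} : Set V), ∀ b, T.Adj a b → b ∈ ({u, v} : Set V) := by
      intro a ha b hb
      simp only [Set.mem_insert_iff, Set.mem_singleton_iff] at ha ⊢
      have haB : a ∉ cn T s ∪ cn T d := by
        rcases ha with e | e
        · rw [e]; exact hu
        · rw [e]; exact hv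
      rcases hnb a b haB hb with e | e <;> simp [e]
    have : s ∈ ({u, v} : Set V) :=
      closed_reach hS (by simp) (conn.preconnected u s)
    simp only [Set.mem_insert_iff, Set.mem_singleton_iff] at this
    have hsB : s ∈ cn T s ∪ cn T d := Finset.mem_union_left _ (self_mem_cn s)
    rcases this with e | e
    · exact hu (e ▸ hsB)
    · exact hv (e ▸ hsB)
  -- ======== main argument ========
  obtain ⟨ℓ, p, hadj, huniq⟩ := exists_leaf hT h2
  have hcnl : ∀ x, x ∈ cn T ℓ ↔ x = ℓ ∨ x = p := by
    intro x
    constructor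
    · intro hx
      rcases mem_cn.1 hx with e | e
      · exact Or.inl e
      · exact Or.inr (huniq x e)
    · rintro (e | e)
      · exact mem_cn.2 (Or.inl e)
      · exact mem_cn.2 (Or.inr (by rw [e]; exact hadj))
  obtain ⟨h, u, hul', huh, hcov⟩ := hDag ℓ
  obtain ⟨s, hsval, hM⟩ := hA h
  have hMx : ∀ x, ∃ m, m ∉ cn T h ∧ m ∉ cn T s ∧ m ∉ cn T x := by
    intro x
    have := hM x
    obtain ⟨m, hm⟩ : ∃ m, m ∉ cn T h ∪ cn T s ∪ cn T x := by
      by_contra hc; push_neg at hc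
      exact this (Finset.eq_univ_iff_forall.2 hc)
    simp only [Finset.mem_union, not_or] at hm
    exact ⟨m, hm.1.1, hm.1.2, hm.2⟩
  have hhp : ∀ m, m ∉ cn T h → m = ℓ ∨ m = p ∨ m = u := by
    intro m hm
    by_cases hmu : m = u
    · exact Or.inr (Or.inr hmu)
    · rcases Finset.mem_union.1 (hcov m hmu) with hc | hc
      · rcases (hcnl m).1 hc with e | e
        · exact Or.inl e
        · exact Or.inr (Or.inl e)
      · exact absurd hc hm
  -- u-facts
  obtain ⟨m₁, hm₁h, hm₁s, hm₁p⟩ := hMx p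
  have hm₁u : m₁ = u := by
    rcases hhp m₁ hm₁h with e | e | e
    · exact absurd (mem_cn.2 (Or.inr (show T.Adj p m₁ by rw [e]; exact T.adj_symm hadj))) hm₁p
    · exact absurd (mem_cn.2 (Or.inl e)) hm₁p
    · exact e
  have hup : u ∉ cn T p := hm₁u ▸ hm₁p
  have hus : u ∉ cn T s := hm₁u ▸ hm₁s
  have hune_l : u ≠ ℓ := fun e => hul' (mem_cn.2 (Or.inl e))
  have hune_p : u ≠ p := fun e => hup (mem_cn.2 (Or.inl e))
  have hune_h : u ≠ h := fun e => huh (mem_cn.2 (Or.inl e))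
  -- p ≠ h
  have hph : p ≠ h := by
    intro e
    obtain ⟨m, hmh, hms, hmu⟩ := hMx u
    rcases hhp m hmh with f | f | f
    · exact hmh (mem_cn.2 (Or.inr (show T.Adj h m by rw [f, ← e]; exact T.adj_symm hadj)))
    · exact hmh (mem_cn.2 (Or.inl (f.trans e)))
    · exact hmu (mem_cn.2 (Or.inl f))
  -- ℓ ∉ cn h
  have hlh : ℓ ∉ cn T h := by
    intro hin
    rcases mem_cn.1 hin with e | e
    · -- ℓ = h
      obtain ⟨m, hmh, hms, hmu⟩ := hMx u
      rcases hhp m hmh with f | f | f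
      · exact hmh (mem_cn.2 (Or.inl (f.trans e)))
      · exact hmh (mem_cn.2 (Or.inr (show T.Adj h m by rw [f, ← e]; exact hadj)))
      · exact hmu (mem_cn.2 (Or.inl f))
    · exact hph (huniq h (T.adj_symm e)).symm
  -- neighbors of u
  have hunb : ∀ w, T.Adj u w → T.Adj h w := by
    intro w hw
    have hwl : w ≠ ℓ := fun e => hul' (adj_mem_cn' (show T.Adj u ℓ from e ▸ hw))
    have hwp : w ≠ p := fun e => hup (adj_mem_cn' (show T.Adj u p from e ▸ hw))
    have hwu : w ≠ u := fun e => T.irrefl (e ▸ hw)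
    have hwcn : w ∈ cn T h := by
      by_contra hc
      rcases hhp w hc with e | e | e
      · exact hwl e
      · exact hwp e
      · exact hwu e
    rcases mem_cn.1 hwcn with e | e
    · exact absurd (adj_mem_cn' (show T.Adj u h from e ▸ hw)) huh
    · exact e
  obtain ⟨a, hua⟩ := exists_adj conn h2 u
  have hah : T.Adj h a := hunb a hua
  have huuniq : ∀ w, T.Adj u w → w = a := by
    intro w hw
    by_contra hne
    exact no_C4 acyc hne hune_h hw (T.adj_symm (hunb w hw)) hah (T.adj_symm hua)
  have hcnu : ∀ x, x ∈ cn T u ↔ x = u ∨ x = a := by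
    intro x
    constructor
    · intro hx
      rcases mem_cn.1 hx with e | e
      · exact Or.inl e
      · exact Or.inr (huuniq x e)
    · rintro (e | e)
      · exact mem_cn.2 (Or.inl e)
      · exact mem_cn.2 (Or.inr (by rw [e]; exact hua))
  have hap : a ≠ p := fun e => hup (adj_mem_cn' (show T.Adj u p from e ▸ hua))
  have hal : a ≠ ℓ := fun e => hul' (adj_mem_cn' (show T.Adj u ℓ from e ▸ hua))
  have hau : a ≠ u := fun e => T.irrefl (e ▸ hua)
  -- machinery at the leaf u
  obtain ⟨k, u2, hu2u, hu2k, hcov2⟩ := hDag u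
  obtain ⟨s2, hs2val, hM2⟩ := hA k
  have hM2x : ∀ x, ∃ m, m ∉ cn T k ∧ m ∉ cn T s2 ∧ m ∉ cn T x := by
    intro x
    have := hM2 x
    obtain ⟨m, hm⟩ : ∃ m, m ∉ cn T k ∪ cn T s2 ∪ cn T x := by
      by_contra hc; push_neg at hc
      exact this (Finset.eq_univ_iff_forall.2 hc)
    simp only [Finset.mem_union, not_or] at hm
    exact ⟨m, hm.1.1, hm.1.2, hm.2⟩
  have hhp2 : ∀ m, m ∉ cn T k → m = u ∨ m = a ∨ m = u2 := by
    intro m hm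
    by_cases hmu : m = u2
    · exact Or.inr (Or.inr hmu)
    · rcases Finset.mem_union.1 (hcov2 m hmu) with hc | hc
      · rcases (hcnu m).1 hc with e | e
        · exact Or.inl e
        · exact Or.inr (Or.inl e)
      · exact absurd hc hm
  obtain ⟨m₂, hm₂k, hm₂s2, hm₂a⟩ := hM2x a
  have hm₂u2 : m₂ = u2 := by
    rcases hhp2 m₂ hm₂k with e | e | e
    · exact absurd (mem_cn.2 (Or.inr (show T.Adj a m₂ by rw [e]; exact T.adj_symm hua))) hm₂a
    · exact absurd (mem_cn.2 (Or.inl e)) hm₂a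
    · exact e
  have hu2a : u2 ∉ cn T a := hm₂u2 ▸ hm₂a
  have hu2s2 : u2 ∉ cn T s2 := hm₂u2 ▸ hm₂s2
  have hu2ne_u : u2 ≠ u := fun e => hu2u (mem_cn.2 (Or.inl e))
  have hu2ne_a : u2 ≠ a := fun e => hu2a (mem_cn.2 (Or.inl e))
  have hu2ne_k : u2 ≠ k := fun e => hu2k (mem_cn.2 (Or.inl e))
  have hu2ne_h : u2 ≠ h := fun e => hu2a (mem_cn.2 (Or.inr (by rw [e]; exact T.adj_symm hah)))
  have hka : k ≠ a := by
    intro e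
    obtain ⟨m, hmk, hms2, hmu2⟩ := hM2x u2
    rcases hhp2 m hmk with f | f | f
    · exact hmk (mem_cn.2 (Or.inr (show T.Adj k m by rw [f, e]; exact T.adj_symm hua)))
    · exact hmk (mem_cn.2 (Or.inl (f.trans e.symm)))
    · exact hmu2 (mem_cn.2 (Or.inl f))
  -- neighbors of u2
  have hu2nb : ∀ w, T.Adj u2 w → T.Adj k w := by
    intro w hw
    have hwu : w ≠ u := fun e => hu2u (adj_mem_cn' (show T.Adj u2 u from e ▸ hw))
    have hwa : w ≠ a := fun e => hu2a (adj_mem_cn' (show T.Adj u2 a from e ▸ hw))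
    have hwu2 : w ≠ u2 := fun e => T.irrefl (e ▸ hw)
    have hwcn : w ∈ cn T k := by
      by_contra hc
      rcases hhp2 w hc with e | e | e
      · exact hwu e
      · exact hwa e
      · exact hwu2 e
    rcases mem_cn.1 hwcn with e | e
    · exact absurd (adj_mem_cn' (show T.Adj u2 k from e ▸ hw)) hu2k
    · exact e
  -- h is in cn k
  have hhk : h ∈ cn T k := by
    by_contra hc
    rcases hhp2 h hc with e | e | e
    · exact hune_h e.symm
    · exact (T.ne_of_adj hah) e
    · exact hu2ne_h e.symm
  rcases mem_cn.1 hhk with hkh | hkadh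
  · -- CASE 1 : h = k
    subst hkh
    by_cases hu2l : u2 = ℓ
    · -- CASE 1a : u2 = ℓ
      have hu2nbl : ∀ w, T.Adj ℓ w → T.Adj h w := fun w hw =>
        hu2nb w (by rw [hu2l]; exact hw)
      have hph' : T.Adj h p := hu2nbl p hadj
      have hNh : ∀ b, T.Adj h b → b = p ∨ b = a := by
        intro b hb
        by_contra hc
        push_neg at hc
        obtain ⟨hbp, hba⟩ := hc
        have hbl : b ≠ ℓ := fun e => hlh (mem_cn.2 (Or.inr (by rw [← e]; exact hb)))
        have hbu : b ≠ u := fun e => huh (mem_cn.2 (Or.inr (by rw [← e]; exact hb)))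
        obtain ⟨e', w, hwB, hwE, hcove⟩ := hDag b
        have hlb : ℓ ∉ cn T b := by
          intro hin
          rcases mem_cn.1 hin with f | f
          · exact hbl f.symm
          · exact hbp (huniq b (T.adj_symm f))
        have hub : u ∉ cn T b := by
          intro hin
          rcases mem_cn.1 hin with f | f
          · exact hbu f.symm
          · exact hba (huuniq b (T.adj_symm f))
        by_cases hlw : ℓ = w
        · have hu_ne_w : u ≠ w := fun f => hune_l (f.trans hlw.symm)
          have hue : u ∈ cn T e' := by
            rcases Finset.mem_union.1 (hcove u hu_ne_w) with f | f
            · exact absurd f hub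
            · exact f
          have hea : e' = u ∨ e' = a := by
            rcases mem_cn.1 hue with f | f
            · exact Or.inl f.symm
            · exact Or.inr (huuniq e' (T.adj_symm f))
          have hpw : p ≠ w := fun f => (T.ne_of_adj hadj) (hlw.trans f.symm)
          rcases Finset.mem_union.1 (hcove p hpw) with f | f
          · rcases mem_cn.1 f with g | g
            · exact hbp g.symm
            · exact tri hb g hph'
          · rcases hea with g | g
            · rw [g] at f
              rcases (hcnu p).1 f with g' | g'
              · exact hune_p g'.symm
              · exact hap g'.symm
            · rw [g] at f
              rcases mem_cn.1 f with g' | g'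
              · exact hap g'.symm
              · exact tri hph' (T.adj_symm g') hah
        · have hle : ℓ ∈ cn T e' := by
            rcases Finset.mem_union.1 (hcove ℓ hlw) with f | f
            · exact absurd f hlb
            · exact f
          have hel : e' = ℓ ∨ e' = p := by
            rcases mem_cn.1 hle with f | f
            · exact Or.inl f.symm
            · exact Or.inr (huniq e' (T.adj_symm f))
          have hwu : w = u := by
            by_contra hne
            have := hcove u (fun f => hne f.symm)
            rcases Finset.mem_union.1 this with f | f
            · exact hub f
            · rcases hel with g | g
              · rw [g] at f; exact hul' f
              · rw [g] at f; exact hup f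
          have haw : a ≠ w := fun f => hau (f.trans hwu)
          rcases Finset.mem_union.1 (hcove a haw) with f | f
          · rcases mem_cn.1 f with g | g
            · exact hba g.symm
            · exact tri hb g hah
          · rcases hel with g | g
            · rw [g] at f
              rcases (hcnl a).1 f with g' | g'
              · exact hal g'
              · exact hap g'
            · rw [g] at f
              rcases mem_cn.1 f with g' | g'
              · exact hap g'
              · exact tri hph' g' hah
      obtain ⟨m, hmh', hms, hmu'⟩ := hMx u
      have hml : m = ℓ := by
        rcases hhp m hmh' with e | e | e
        · exact e
        · exact absurd (mem_cn.2 (Or.inr (show T.Adj h m by rw [e]; exact hph'))) hmh'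
        · exact absurd (mem_cn.2 (Or.inl e)) hmu'
      have hls : ℓ ∉ cn T s := hml ▸ hms
      by_cases hsin : s ∈ cn T h
      · rcases mem_cn.1 hsin with e | e
        · exact hsval (by rw [e])
        · rcases hNh s e with f | f
          · exact hls (mem_cn.2 (Or.inr (by rw [f]; exact T.adj_symm hadj)))
          · exact hus (mem_cn.2 (Or.inr (by rw [f]; exact T.adj_symm hua)))
      · rcases hhp s hsin with e | e | e
        · exact hls (mem_cn.2 (Or.inl e.symm))
        · exact hls (mem_cn.2 (Or.inr (by rw [e]; exact T.adj_symm hadj)))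
        · exact hus (mem_cn.2 (Or.inl e.symm))
    · by_cases hu2p : u2 = p
      · -- u2 = p : contradiction since then ℓ ∈ cn h
        have : T.Adj u2 ℓ := by rw [hu2p]; exact T.adj_symm hadj
        exact hlh (adj_mem_cn (hu2nb ℓ this))
      · -- u2 ∉ {ℓ, p} : everything outside cn h is u
        obtain ⟨m, hmh, hms, hmu⟩ := hMx u
        rcases hhp m hmh with e | e | e
        · rcases hhp2 m hmh with f | f | f
          · exact hune_l (f.symm.trans e)
          · exact hal (f.symm.trans e)
          · exact hu2l (f.symm.trans e)
        · rcases hhp2 m hmh with f | f | f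
          · exact hune_p (f.symm.trans e)
          · exact hap (f.symm.trans e)
          · exact hu2p (f.symm.trans e)
        · exact hmu (mem_cn.2 (Or.inl e))
  · -- CASE 2 : Adj k h
    have hkh_ne : k ≠ h := T.ne_of_adj hkadh
    by_cases hlu2 : ℓ = u2
    · -- CASE 2a : ℓ = u2, the P6 configuration
      have hkp' : T.Adj k p := hu2nb p (by rw [← hlu2]; exact hadj)
      have hnph : ¬ T.Adj h p := fun hc => tri hc (T.adj_symm hkp') (T.adj_symm hkadh)
      have hNh3 : ∀ b, T.Adj h b → b = a ∨ b = k := by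
        intro b hb
        by_contra hc
        push_neg at hc
        obtain ⟨hba, hbk⟩ := hc
        have hbl : b ≠ ℓ := fun e => hlh (mem_cn.2 (Or.inr (by rw [← e]; exact hb)))
        have hbu : b ≠ u := fun e => huh (mem_cn.2 (Or.inr (by rw [← e]; exact hb)))
        have hbp : b ≠ p := fun e => hnph (by rw [← e]; exact hb)
        have hbnk : b ∉ cn T k := by
          intro hin
          rcases mem_cn.1 hin with f | f
          · exact hbk f
          · exact tri hb (T.adj_symm f) (T.adj_symm hkadh)
        rcases hhp2 b hbnk with f | f | f
        · exact hbu f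
        · exact hba f
        · exact hbl (f.trans hlu2.symm)
      obtain ⟨s3, _, hM3⟩ := hA p
      obtain ⟨m, hm⟩ : ∃ m, m ∉ cn T p ∪ cn T s3 ∪ cn T a := by
        by_contra hc
        push_neg at hc
        exact hM3 a (Finset.eq_univ_iff_forall.2 hc)
      simp only [Finset.mem_union, not_or] at hm
      obtain ⟨⟨hmp, hms3⟩, hma⟩ := hm
      have hmll : m ≠ ℓ := fun e => hmp (mem_cn.2 (Or.inr (by rw [e]; exact T.adj_symm hadj)))
      have hmu : m ≠ u := fun e => hma (mem_cn.2 (Or.inr (by rw [e]; exact T.adj_symm hua)))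
      have hmcnh : m ∈ cn T h := by
        by_contra hc
        rcases hhp m hc with e | e | e
        · exact hmll e
        · exact hmp (mem_cn.2 (Or.inl e))
        · exact hmu e
      rcases mem_cn.1 hmcnh with e | e
      · exact hma (mem_cn.2 (Or.inr (by rw [e]; exact T.adj_symm hah)))
      · rcases hNh3 m e with f | f
        · exact hma (mem_cn.2 (Or.inl f))
        · exact hmp (mem_cn.2 (Or.inr (by rw [f]; exact T.adj_symm hkp')))
    · -- ℓ ≠ u2, so ℓ ∈ cn k
      have hlink : ℓ ∈ cn T k := by
        by_contra hc
        rcases hhp2 ℓ hc with e | e | e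
        · exact hune_l e.symm
        · exact hal e.symm
        · exact hlu2 e
      rcases mem_cn.1 hlink with e | hkl
      · -- ℓ = k : contradiction via h ∈ cn ℓ
        have : h ∈ cn T ℓ := e ▸ hhk
        rcases (hcnl h).1 this with f | f
        · exact hlh (f ▸ self_mem_cn h)
        · exact hph f.symm
      · -- Adj k ℓ so k = p
        have hkp : k = p := huniq k (T.adj_symm hkl)
        have hph2 : T.Adj p h := by rw [← hkp]; exact hkadh
        have hphadj : T.Adj h p := T.adj_symm hph2
        have hNh2 : ∀ b, T.Adj h b → b = a ∨ b = p ∨ b = u2 := by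
          intro b hb
          by_contra hc
          push_neg at hc
          obtain ⟨hba, hbp, hbu2⟩ := hc
          have hbnp : b ∉ cn T p := by
            intro hin
            rcases mem_cn.1 hin with f | f
            · exact hbp f
            · exact tri hphadj f hb
          have hbnk : b ∉ cn T k := by rw [hkp]; exact hbnp
          rcases hhp2 b hbnk with f | f | f
          · exact huh (mem_cn.2 (Or.inr (by rw [← f]; exact hb)))
          · exact hba f
          · exact hbu2 f
        obtain ⟨m, hmh', hms, hmu'⟩ := hMx u
        have hml : m = ℓ := by
          rcases hhp m hmh' with e | e | e
          · exact e
          · exact absurd (mem_cn.2 (Or.inr (show T.Adj h m by rw [e]; exact hphadj))) hmh'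
          · exact absurd (mem_cn.2 (Or.inl e)) hmu'
        have hls : ℓ ∉ cn T s := hml ▸ hms
        by_cases hsin : s ∈ cn T h
        · rcases mem_cn.1 hsin with e | e
          · exact hsval (by rw [e])
          · rcases hNh2 s e with f | f | f
            · exact hus (mem_cn.2 (Or.inr (by rw [f]; exact T.adj_symm hua)))
            · exact hls (mem_cn.2 (Or.inr (by rw [f]; exact T.adj_symm hadj)))
            · -- s = u2 adjacent to h : show cn u2 ⊆ cn h
              apply hsval
              rw [f]
              intro x hx
              have hhu2 : T.Adj h u2 := by rw [← f]; exact e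
              rcases mem_cn.1 hx with g | g
              · exact mem_cn.2 (Or.inr (by rw [g]; exact hhu2))
              · by_cases hxh : x = h
                · exact mem_cn.2 (Or.inl hxh)
                · exact (no_C4 acyc
                    (show u2 ≠ p from fun q => hu2k (mem_cn.2 (Or.inl (q.trans hkp.symm))))
                    (show h ≠ x from fun q => hxh q.symm) hhu2 g
                    (T.adj_symm (show T.Adj p x by rw [← hkp]; exact hu2nb x g)) hph2).elim
        · rcases hhp s hsin with e | e | e
          · exact hls (mem_cn.2 (Or.inl e.symm))
          · exact hls (mem_cn.2 (Or.inr (by rw [e]; exact T.adj_symm hadj)))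
          · exact hus (mem_cn.2 (Or.inl e.symm))



theorem stmt9' {V : Type*} [Fintype V] [DecidableEq V] (T : SimpleGraph V)
    (hT : T.IsTree) :
    ¬ (gammaG T = 4 ∧ gammaG' T = 3) := by
  rintro ⟨h4, h3⟩
  unfold gammaG gVal at h4
  unfold gammaG' gVal' at h3
  have hle := auxVal_le_fuel (G := T) (Fintype.card V) true (∅ : Finset V)
  have hcard : 4 ≤ Fintype.card V := by omega
  obtain ⟨m, hm⟩ : ∃ m, Fintype.card V = m + 4 := ⟨Fintype.card V - 4, by omega⟩
  rw [hm] at h4 h3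
  have h4' : auxVal T (m + 3 + 1) true ∅ = 4 := h4
  have h3' : auxVal T (m + 3 + 1) false ∅ = 3 := h3
  have hA : ∀ d : V, ∃ s, ¬ cn T s ⊆ cn T d ∧
      ∀ x, cn T d ∪ cn T s ∪ cn T x ≠ Finset.univ := by
    intro d
    have h1 : 3 + 1 ≤ auxVal T (m + 3 + 1) true ∅ := by omega
    have h2d := f_ge h1 (cn_valid ∅ (Finset.notMem_empty d))
    rw [Finset.empty_union] at h2d
    have h2d' : 2 + 1 ≤ auxVal T (m + 2 + 1) false (cn T d) := by
      have : m + 3 = m + 2 + 1 := rfl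
      rw [this] at h2d; omega
    obtain ⟨s, hsv, h3s⟩ := g_ge h2d'
    refine ⟨s, hsv, fun x hx => ?_⟩
    by_cases hc : cn T x ⊆ cn T d ∪ cn T s
    · have hBu : cn T d ∪ cn T s = Finset.univ := by
        rw [← hx]; exact (Finset.union_eq_left.2 hc).symm
      exact ne_univ_of_pos (le_trans (by omega) h3s) hBu
    · have h3s' : 1 + 1 ≤ auxVal T (m + 1 + 1) true (cn T d ∪ cn T s) := by
        have : m + 2 = m + 1 + 1 := rfl
        rw [this] at h3s; omega
      have h4x := f_ge h3s' hc
      exact ne_univ_of_pos (le_trans (by omega) h4x) hx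
  have hB : ∀ s : V, cn T s ≠ Finset.univ →
      ∃ d, ∀ t, ¬ cn T t ⊆ cn T s ∪ cn T d →
        cn T s ∪ cn T d ∪ cn T t = Finset.univ := by
    intro s hsne
    have h1 : auxVal T (m + 3 + 1) false ∅ ≤ 2 + 1 := by omega
    have h2s := g_le h1 (cn_valid ∅ (Finset.notMem_empty s))
    rw [Finset.empty_union] at h2s
    have h2s' : auxVal T (m + 2 + 1) true (cn T s) ≤ 1 + 1 := by
      have : m + 3 = m + 2 + 1 := rfl
      rw [this] at h2s; omega
    obtain ⟨d, hdv, h3d⟩ := f_le h2s' hsne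
    refine ⟨d, fun t ht => ?_⟩
    have h4t : auxVal T (m + 1 + 1) false (cn T s ∪ cn T d) ≤ 0 + 1 := by
      have : m + 2 = m + 1 + 1 := rfl
      rw [this] at h3d; omega
    have h5t := g_le h4t ht
    exact f_eq_zero (Nat.le_zero.1 h5t)
  exact core T hT (by omega) hA hB

end DomGame

/-- no tree realizes the pair (4, 3). -/
theorem stmt9 {V : Type*} [Fintype V] [DecidableEq V] (T : SimpleGraph V)
    (hT : T.IsTree) :
    ¬ (DomGame.gammaG T = 4 ∧ DomGame.gammaG' T = 3) := by
  exact DomGame.stmt9' T hT
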